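/- Let X = (X₀, (X_e)_{e∈E'}) be independent random variables, A an event determined by X, and F the σ-algebra generated by (X_e)_{e∈E'}. Then (1/2)·E[P[A changes when X₀ is resampled | F]] = Var(1_A) − E[Var(1_A | F)] = Var(P[A | F]). Consequently, for any randomized algorithm determining A, Var(P[A|F]) ≤ (1/2)·Σ_{e∈E'} Rev(e)·Infl(e), where Rev(e) is the revealment of X_e and Infl(e) the resampling influence. -/

import Mathlib

open MeasureTheory ENNReal

/-- Let `X = (X₀, (X_e)_{e∈E'})` be independent, realized on a product probability space
`Ω₀ × Ω₁` with law `μ = P₀ ⊗ P₁`, where `X₀` lives on the factor `Ω₀` and `(X_e)_{e∈E'}`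
on the factor `Ω₁`; `F = σ(Prod.snd)` is the σ-algebra generated by the second factor and
`g = P[A | F]`. Then:
`(1/2)·E[P[A changes when X₀ is resampled | F]] = ∫ g(1-g) dμ = E[Var(1_A|F)]`,
`Var(P[A|F]) = Var(1_A) − E[Var(1_A|F)]` (law of total variance), and consequently,
given the OSSS inequality
`Var(1_A) ≤ (1/2)(Infl(0) + Σ_{e∈E'} Rev(e)·Infl(e))` for an algorithm determining `A`
(bounding the revealment of `X₀` by 1), one gets
`Var(P[A|F]) ≤ (1/2)·Σ_{e∈E'} Rev(e)·Infl(e)`. -/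
theorem condexp_variance_osss {Ω₀ Ω₁ : Type*} [MeasurableSpace Ω₀] [MeasurableSpace Ω₁]
    (P₀ : Measure Ω₀) (P₁ : Measure Ω₁)
    [IsProbabilityMeasure P₀] [IsProbabilityMeasure P₁]
    (A : Set (Ω₀ × Ω₁)) (hA : MeasurableSet A)
    {ι : Type*} (E' : Finset ι) (Rev Infl : ι → ℝ)
    (μ : Measure (Ω₀ × Ω₁)) (hμ : μ = P₀.prod P₁)
    (g : Ω₀ × Ω₁ → ℝ)
    (hg : g = μ[A.indicator (fun _ => (1:ℝ))|MeasurableSpace.comap Prod.snd inferInstance])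
    (Infl0 : ℝ)
    (hInfl0 : Infl0 = (((P₀.prod P₁).prod P₀) {p : (Ω₀ × Ω₁) × Ω₀ |
      ¬(p.1 ∈ A ↔ (p.2, p.1.2) ∈ A)}).toReal)
    (hOSSS : ∫ x, (A.indicator (fun _ => (1:ℝ)) x - (μ A).toReal) ^ 2 ∂μ ≤
      (1/2) * (Infl0 + ∑ e ∈ E', Rev e * Infl e)) :
    (1/2) * Infl0 = ∫ x, g x * (1 - g x) ∂μ ∧
    (∫ x, (g x - (μ A).toReal) ^ 2 ∂μ) =
      (∫ x, (A.indicator (fun _ => (1:ℝ)) x - (μ A).toReal) ^ 2 ∂μ) -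
        ∫ x, g x * (1 - g x) ∂μ ∧
    (∫ x, (g x - (μ A).toReal) ^ 2 ∂μ) ≤ (1/2) * ∑ e ∈ E', Rev e * Infl e := by
  subst hμ
  set F₀ : Ω₀ × Ω₁ → ℝ := A.indicator (fun _ => (1:ℝ)) with hF₀
  set m : ℝ := ((P₀.prod P₁) A).toReal with hmdef
  -- the slice measure
  set q : Ω₁ → ℝ≥0∞ := fun y => P₀ ((fun x => (x, y)) ⁻¹' A) with hqdef
  have hq_meas : Measurable q := measurable_measure_prodMk_right hA
  have hq_le : ∀ y, q y ≤ 1 := fun y => prob_le_one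
  have hq_lt : ∀ y, q y < ⊤ := fun y => lt_of_le_of_lt (hq_le y) ENNReal.one_lt_top
  have hA_slice : ∀ y : Ω₁, MeasurableSet ((fun x => (x, y)) ⁻¹' A) :=
    fun y => measurable_prodMk_right hA
  set f : Ω₁ → ℝ := fun y => (q y).toReal with hfdef
  have hf_meas : Measurable f := hq_meas.ennreal_toReal
  have hf_nonneg : ∀ y, 0 ≤ f y := fun y => ENNReal.toReal_nonneg
  have hf_le : ∀ y, f y ≤ 1 := fun y => by
    simpa using ENNReal.toReal_mono ENNReal.one_ne_top (hq_le y)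
  have hint : ∀ φ : Ω₁ → ℝ, Measurable φ → (∀ y, |φ y| ≤ 1) → Integrable φ P₁ := fun φ hφ hb =>
    (integrable_const (1 : ℝ)).mono' hφ.aestronglyMeasurable (ae_of_all _ fun y => by
      simpa using hb y)
  have hf_int : Integrable f P₁ := hint f hf_meas fun y => by
    rw [abs_of_nonneg (hf_nonneg y)]; exact hf_le y
  have hf2_int : Integrable (fun y => f y ^ 2) P₁ := by
    refine hint _ (hf_meas.pow_const 2) fun y => ?_
    rw [abs_of_nonneg (by positivity)]
    calc f y ^ 2 ≤ 1 ^ 2 := by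
          exact pow_le_pow_left₀ (hf_nonneg y) (hf_le y) 2
      _ = 1 := one_pow 2
  have hcomp : ∀ φ : Ω₁ → ℝ, Measurable φ →
      ∫ p, φ p.2 ∂(P₀.prod P₁) = ∫ y, φ y ∂P₁ := by
    intro φ hφ
    have h1 : (P₀.prod P₁).map Prod.snd = P₁ := by
      rw [show (P₀.prod P₁).map Prod.snd = (P₀.prod P₁).snd from rfl, Measure.snd_prod]
    calc ∫ p, φ p.2 ∂(P₀.prod P₁)
        = ∫ y, φ y ∂((P₀.prod P₁).map Prod.snd) :=
          (integral_map measurable_snd.aemeasurable hφ.aestronglyMeasurable).symm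
      _ = ∫ y, φ y ∂P₁ := by rw [h1]
  have hμA : (P₀.prod P₁) A = ∫⁻ y, q y ∂P₁ := Measure.prod_apply_symm hA
  have hfm : ∫ y, f y ∂P₁ = m := by
    rw [hmdef, hμA, ← integral_toReal hq_meas.aemeasurable (ae_of_all _ hq_lt)]
  -- conditional expectation identification
  have hm_le : (MeasurableSpace.comap (Prod.snd : Ω₀ × Ω₁ → Ω₁) inferInstance) ≤
      Prod.instMeasurableSpace := measurable_snd.comap_le
  haveI : SigmaFinite ((P₀.prod P₁).trim hm_le) := by
    haveI : IsFiniteMeasure ((P₀.prod P₁).trim hm_le) := isFiniteMeasure_trim hm_le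
    infer_instance
  have hF₀_int : Integrable F₀ (P₀.prod P₁) := (integrable_const (1:ℝ)).indicator hA
  have hfsnd_int : Integrable (fun p : Ω₀ × Ω₁ => f p.2) (P₀.prod P₁) :=
    (integrable_const (1 : ℝ)).mono' (hf_meas.comp measurable_snd).aestronglyMeasurable
      (ae_of_all _ fun p => by
        rw [Real.norm_eq_abs, abs_of_nonneg (hf_nonneg _)]; simpa using hf_le p.2)
  have hgf : (fun p : Ω₀ × Ω₁ => f p.2) =ᵐ[P₀.prod P₁] g := by
    rw [hg]
    refine ae_eq_condExp_of_forall_setIntegral_eq hm_le hF₀_int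
      (fun s _ _ => hfsnd_int.integrableOn) ?_ ?_
    · rintro s ⟨B, hB, rfl⟩ -
      have hS : MeasurableSet (Prod.snd ⁻¹' B : Set (Ω₀ × Ω₁)) := measurable_snd hB
      have key : ∀ y : Ω₁, P₀ ((fun x => (x, y)) ⁻¹' (Prod.snd ⁻¹' B ∩ A)) =
          B.indicator q y := by
        intro y
        by_cases hy : y ∈ B
        · have : ((fun x => (x, y)) ⁻¹' (Prod.snd ⁻¹' B ∩ A)) = (fun x => (x, y)) ⁻¹' A := by
            ext x; simp [hy]
          rw [this, Set.indicator_of_mem hy]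
        · have : ((fun x => (x, y)) ⁻¹' (Prod.snd ⁻¹' B ∩ A)) = ∅ := by
            ext x; simp [hy]
          rw [this, Set.indicator_of_notMem hy]; simp
      have hRHS : ∫ p in Prod.snd ⁻¹' B, F₀ p ∂(P₀.prod P₁) =
          (∫⁻ y in B, q y ∂P₁).toReal := by
        rw [hF₀, setIntegral_indicator hA, setIntegral_const, smul_eq_mul, mul_one, measureReal_def,
          Measure.prod_apply_symm (hS.inter hA), ← lintegral_indicator hB _]
        congr 1
        exact lintegral_congr key
      have hLHS : ∫ p in Prod.snd ⁻¹' B, f p.2 ∂(P₀.prod P₁) =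
          (∫⁻ y in B, q y ∂P₁).toReal := by
        have h1 : (fun p : Ω₀ × Ω₁ => (Prod.snd ⁻¹' B).indicator (fun p : Ω₀ × Ω₁ => f p.2) p)
            = fun p : Ω₀ × Ω₁ => B.indicator f p.2 := by
          funext p; by_cases hp : p.2 ∈ B <;> simp [hp]
        rw [← integral_indicator hS, h1, hcomp _ (hf_meas.indicator hB),
          integral_indicator hB,
          ← integral_toReal hq_meas.aemeasurable (ae_of_all _ hq_lt)]
      rw [hRHS, hLHS]
    · exact ((hf_meas.comp (measurable_iff_comap_le.mpr le_rfl)).stronglyMeasurable).aestronglyMeasurable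
  -- transfer integrals of g to integrals over P₁
  have hI1 : ∫ p, g p * (1 - g p) ∂(P₀.prod P₁) = ∫ y, f y * (1 - f y) ∂P₁ := by
    rw [← hcomp (fun y => f y * (1 - f y)) (hf_meas.mul (measurable_const.sub hf_meas))]
    refine integral_congr_ae ?_
    filter_upwards [hgf] with p hp
    rw [← hp]
  have hI2 : ∫ p, (g p - m) ^ 2 ∂(P₀.prod P₁) = ∫ y, (f y - m) ^ 2 ∂P₁ := by
    rw [← hcomp (fun y => (f y - m) ^ 2) ((hf_meas.sub measurable_const).pow_const 2)]
    refine integral_congr_ae ?_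
    filter_upwards [hgf] with p hp
    rw [← hp]
  -- the key lintegral J
  set J : ℝ≥0∞ := ∫⁻ y, q y * (1 - q y) ∂P₁ with hJdef
  have hJq : ∀ y, f y * (1 - f y) = (q y * (1 - q y)).toReal := by
    intro y
    rw [ENNReal.toReal_mul, ENNReal.toReal_sub_of_le (hq_le y) ENNReal.one_ne_top,
      ENNReal.toReal_one]
  have hqq_meas : Measurable fun y => q y * (1 - q y) :=
    hq_meas.mul (measurable_const.sub hq_meas)
  have hqq_lt : ∀ y, q y * (1 - q y) < ⊤ := fun y =>
    ENNReal.mul_lt_top (hq_lt y) (lt_of_le_of_lt tsub_le_self ENNReal.one_lt_top)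
  have hJ : ∫ y, f y * (1 - f y) ∂P₁ = J.toReal := by
    simp_rw [hJq]
    exact integral_toReal hqq_meas.aemeasurable (ae_of_all _ hqq_lt)
  have hJ_le : J ≤ 1 := by
    calc J ≤ ∫⁻ _, 1 ∂P₁ := lintegral_mono fun y =>
          mul_le_one' (hq_le y) (le_trans tsub_le_self le_rfl)
      _ = 1 := by simp
  have hJ_ne : J ≠ ⊤ := (lt_of_le_of_lt hJ_le ENNReal.one_lt_top).ne
  -- compute Infl0
  set D : Set ((Ω₀ × Ω₁) × Ω₀) := {p | ¬(p.1 ∈ A ↔ (p.2, p.1.2) ∈ A)} with hDdef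
  have hS1 : MeasurableSet {p : (Ω₀ × Ω₁) × Ω₀ | p.1 ∈ A} := measurable_fst hA
  have hS2 : MeasurableSet {p : (Ω₀ × Ω₁) × Ω₀ | (p.2, p.1.2) ∈ A} :=
    (measurable_snd.prodMk measurable_fst.snd) hA
  have hD : MeasurableSet D := by
    have : D = ({p : (Ω₀ × Ω₁) × Ω₀ | p.1 ∈ A} ∩ {p | (p.2, p.1.2) ∈ A}ᶜ) ∪
        ({p | (p.2, p.1.2) ∈ A} ∩ {p : (Ω₀ × Ω₁) × Ω₀ | p.1 ∈ A}ᶜ) := by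
      ext p
      by_cases h1 : p.1 ∈ A <;> by_cases h2 : (p.2, p.1.2) ∈ A <;> simp [hDdef, h1, h2]
    rw [this]; exact (hS1.inter hS2.compl).union (hS2.inter hS1.compl)
  have hset : ∀ (S : Set (Ω₀ × Ω₁)), MeasurableSet S → ∀ (φ : Ω₁ → ℝ≥0∞), Measurable φ →
      ∫⁻ p in S, φ p.2 ∂(P₀.prod P₁) = ∫⁻ y, φ y * P₀ ((fun x => (x, y)) ⁻¹' S) ∂P₁ := by
    intro S hS φ hφ
    have hm1 : Measurable fun p : Ω₀ × Ω₁ => φ p.2 := hφ.comp measurable_snd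
    rw [← lintegral_indicator hS _,
      lintegral_prod_symm _ (hm1.indicator hS).aemeasurable]
    refine lintegral_congr fun y => ?_
    have h2 : ∀ x, S.indicator (fun p : Ω₀ × Ω₁ => φ p.2) (x, y) =
        ((fun x => (x, y)) ⁻¹' S).indicator (fun _ => φ y) x := by
      intro x; by_cases hx : (x, y) ∈ S <;> simp [hx]
    simp_rw [h2]
    rw [lintegral_indicator (measurable_prodMk_right hS) _, setLIntegral_const]
  have hDval : ((P₀.prod P₁).prod P₀) D = 2 * J := by
    rw [Measure.prod_apply hD]
    have hslice : ∀ p : Ω₀ × Ω₁, P₀ (Prod.mk p ⁻¹' D) =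
        A.indicator (fun p : Ω₀ × Ω₁ => 1 - q p.2) p +
          Aᶜ.indicator (fun p : Ω₀ × Ω₁ => q p.2) p := by
      intro p
      by_cases hp : p ∈ A
      · have h3 : Prod.mk p ⁻¹' D = ((fun x => (x, p.2)) ⁻¹' A)ᶜ := by
          ext x; simp [hDdef, hp]
        rw [h3, prob_compl_eq_one_sub (hA_slice p.2), Set.indicator_of_mem hp,
          Set.indicator_of_notMem (by simpa using hp), add_zero]
      · have h3 : Prod.mk p ⁻¹' D = (fun x => (x, p.2)) ⁻¹' A := by
          ext x; simp [hDdef, hp]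
        rw [h3, Set.indicator_of_notMem hp, Set.indicator_of_mem (by simpa using hp), zero_add]
    calc ∫⁻ p, P₀ (Prod.mk p ⁻¹' D) ∂(P₀.prod P₁)
        = ∫⁻ p, (A.indicator (fun p : Ω₀ × Ω₁ => 1 - q p.2) p +
            Aᶜ.indicator (fun p : Ω₀ × Ω₁ => q p.2) p) ∂(P₀.prod P₁) :=
          lintegral_congr hslice
      _ = ∫⁻ p in A, (1 - q p.2) ∂(P₀.prod P₁) + ∫⁻ p in Aᶜ, q p.2 ∂(P₀.prod P₁) := by
          have hm2 : Measurable fun p : Ω₀ × Ω₁ => (1 : ℝ≥0∞) - q p.2 :=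
            measurable_const.sub (hq_meas.comp measurable_snd)
          rw [lintegral_add_left (hm2.indicator hA),
            lintegral_indicator hA _, lintegral_indicator hA.compl _]
      _ = ∫⁻ y, (1 - q y) * q y ∂P₁ + ∫⁻ y, q y * (1 - q y) ∂P₁ := by
          rw [hset A hA (fun y => 1 - q y) (measurable_const.sub hq_meas),
            hset Aᶜ hA.compl q hq_meas]
          congr 1
          refine lintegral_congr fun y => ?_
          have : (fun x => (x, y)) ⁻¹' Aᶜ = ((fun x => (x, y)) ⁻¹' A)ᶜ := rfl
          rw [this, prob_compl_eq_one_sub (hA_slice y)]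
      _ = 2 * J := by
          rw [two_mul, hJdef]
          congr 1
          exact lintegral_congr fun y => mul_comm _ _
  have hInfl0' : Infl0 = 2 * J.toReal := by
    rw [hInfl0, hDval, ENNReal.toReal_mul]
    norm_num
  -- real-valued expansions over P₁
  set K : ℝ := ∫ y, f y ^ 2 ∂P₁ with hKdef
  have hexp1 : ∫ y, (f y - m) ^ 2 ∂P₁ = K - 2 * m * m + m ^ 2 := by
    have h4 : ∀ y, (f y - m) ^ 2 = (f y ^ 2 - 2 * m * f y) + m ^ 2 := fun y => by ring
    simp_rw [h4]
    have h5 : Integrable (fun y => f y ^ 2 - 2 * m * f y) P₁ :=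
      hf2_int.sub (hf_int.const_mul (2 * m))
    rw [integral_add h5 (integrable_const _),
      integral_sub hf2_int (hf_int.const_mul (2 * m)), integral_const_mul, hfm,
      integral_const]
    simp [hKdef]
  have hexp2 : ∫ y, f y * (1 - f y) ∂P₁ = m - K := by
    have h4 : ∀ y, f y * (1 - f y) = f y - f y ^ 2 := fun y => by ring
    simp_rw [h4]
    rw [integral_sub hf_int hf2_int, hfm]
  have hexp3 : ∫ x, (F₀ x - m) ^ 2 ∂(P₀.prod P₁) = m - m * m := by
    have h4 : ∀ x, (F₀ x - m) ^ 2 = (1 - 2 * m) * F₀ x + m ^ 2 := by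
      intro x
      by_cases hx : x ∈ A
      · rw [hF₀, Set.indicator_of_mem hx]; ring
      · rw [hF₀, Set.indicator_of_notMem hx]; ring
    simp_rw [h4]
    rw [integral_add (hF₀_int.const_mul _) (integrable_const _), integral_const_mul,
      integral_const]
    have h5 : ∫ x, F₀ x ∂(P₀.prod P₁) = m := by
      rw [hF₀, integral_indicator hA, setIntegral_const, smul_eq_mul, mul_one, measureReal_def, hmdef]
    rw [h5]
    simp
    ring
  -- assemble
  have key1 : (1/2) * Infl0 = ∫ x, g x * (1 - g x) ∂(P₀.prod P₁) := by
    rw [hInfl0', hI1, hJ]; ring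
  have keyg : ∫ x, g x * (1 - g x) ∂(P₀.prod P₁) = m - K := by rw [hI1, hexp2]
  have keyv : ∫ x, (g x - m) ^ 2 ∂(P₀.prod P₁) = K - 2 * m * m + m ^ 2 := by
    rw [hI2, hexp1]
  refine ⟨key1, ?_, ?_⟩
  · rw [keyv, hexp3, keyg]; ring
  · have h6 := hOSSS
    rw [hexp3] at h6
    rw [keyv]
    have h7 : (1/2) * Infl0 = m - K := by rw [key1, keyg]
    nlinarith [h7, h6]
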